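/- Let k ≥ 1, let a : ℕ → ℂ be a k-periodic sequence, let x : ℕ → ℂ satisfy x_{n+2} = a_n x_{n+1} + x_n for all n ≥ 0, and let C_k be the monodromy matrix. Suppose there is an invertible 2×2 complex matrix J such that C_k = J · [[1, 1], [0, 1]] · J⁻¹ (the Jordan form for a double eigenvalue 1). Then for every n ≥ 0: x_{nk} = (J_{2,1}(J⁻¹)_{1,1} + (n J_{2,1} + J_{2,2})(J⁻¹)_{2,1}) x_1 + (J_{2,1}(J⁻¹)_{1,2} + (n J_{2,1} + J_{2,2})(J⁻¹)_{2,2}) x_0, and x_{nk+1} = (J_{1,1}(J⁻¹)_{1,1} + (n J_{1,1} + J_{1,2})(J⁻¹)_{2,1}) x_1 + (J_{1,1}(J⁻¹)_{1,2} + (n J_{1,1} + J_{1,2})(J⁻¹)_{2,2}) x_0. -/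
import Mathlib


/-- The `i`-th Fibonacci matrix. -/
def fibMat (a : ℕ → ℂ) (i : ℕ) : Matrix (Fin 2) (Fin 2) ℂ :=
  !![a i, 1; 1, 0]

/-- The product `C n = A_{n-1} ⋯ A_1 A_0` of Fibonacci matrices. -/
noncomputable def fibProd (a : ℕ → ℂ) : ℕ → Matrix (Fin 2) (Fin 2) ℂ
  | 0 => 1
  | n + 1 => fibMat a n * fibProd a n

lemma fibProd_entries (a : ℕ → ℂ) (x : ℕ → ℂ)
    (hx : ∀ n, x (n + 2) = a n * x (n + 1) + x n) (m : ℕ) :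
    x (m + 1) = (fibProd a m) 0 0 * x 1 + (fibProd a m) 0 1 * x 0 ∧
    x m = (fibProd a m) 1 0 * x 1 + (fibProd a m) 1 1 * x 0 := by
  induction m with
  | zero => simp [fibProd, Matrix.one_apply]
  | succ m ih =>
    obtain ⟨h1, h2⟩ := ih
    have e : fibProd a (m + 1) = fibMat a m * fibProd a m := rfl
    constructor
    · rw [hx m, h1, h2, e]
      simp [fibMat, Matrix.mul_apply, Fin.sum_univ_two]
      ring
    · rw [h1, e]
      simp [fibMat, Matrix.mul_apply, Fin.sum_univ_two]

lemma periodic_mul (a : ℕ → ℂ) (k : ℕ) (ha : ∀ n, a (n + k) = a n) :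
    ∀ m j, a (j + m * k) = a j := by
  intro m
  induction m with
  | zero => simp
  | succ m ih =>
    intro j
    have : j + (m + 1) * k = (j + m * k) + k := by ring
    rw [this, ha, ih]

lemma fibProd_add (a : ℕ → ℂ) (k : ℕ) (ha : ∀ n, a (n + k) = a n) (m : ℕ) :
    ∀ j, fibProd a (m * k + j) = fibProd a j * fibProd a (m * k) := by
  intro j
  induction j with
  | zero => simp [fibProd]
  | succ j ih =>
    have h1 : m * k + (j + 1) = (m * k + j) + 1 := by ring
    rw [h1]
    show fibMat a (m * k + j) * fibProd a (m * k + j) = _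
    have h2 : fibMat a (m * k + j) = fibMat a j := by
      unfold fibMat
      rw [Nat.add_comm (m*k) j, periodic_mul a k ha m j]
    rw [h2, ih]
    show _ = fibMat a j * fibProd a j * fibProd a (m * k)
    rw [Matrix.mul_assoc]

lemma fibProd_pow (a : ℕ → ℂ) (k : ℕ) (ha : ∀ n, a (n + k) = a n) (n : ℕ) :
    fibProd a (n * k) = (fibProd a k) ^ n := by
  induction n with
  | zero => simp [fibProd]
  | succ n ih =>
    have : (n + 1) * k = n * k + k := by ring
    rw [this, fibProd_add a k ha n k, ih, pow_succ']

lemma jordan_pow (n : ℕ) :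
    (!![1, 1; 0, 1] : Matrix (Fin 2) (Fin 2) ℂ) ^ n = !![1, (n : ℂ); 0, 1] := by
  induction n with
  | zero => simp [Matrix.one_fin_two]
  | succ n ih =>
    rw [pow_succ, ih]
    push_cast
    ext i j
    fin_cases i <;> fin_cases j <;>
      simp [Matrix.mul_apply, Fin.sum_univ_two] <;> ring

lemma conjPowAux (J N : Matrix (Fin 2) (Fin 2) ℂ) (hJ : IsUnit J.det) (n : ℕ) :
    (J * N * J⁻¹) ^ n = J * N ^ n * J⁻¹ := by
  induction n with
  | zero => simp [Matrix.mul_nonsing_inv J hJ]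
  | succ n ih =>
    rw [pow_succ, ih, pow_succ]
    have : J⁻¹ * (J * N ^ n * J⁻¹) = N ^ n * J⁻¹ := by
      rw [← Matrix.mul_assoc, ← Matrix.mul_assoc, Matrix.nonsing_inv_mul J hJ, Matrix.one_mul]
    calc J * N ^ n * J⁻¹ * (J * N * J⁻¹)
        = J * N ^ n * (J⁻¹ * J) * N * J⁻¹ := by
          simp only [Matrix.mul_assoc]
      _ = J * (N ^ n * N) * J⁻¹ := by
          rw [Matrix.nonsing_inv_mul J hJ]
          simp only [Matrix.mul_assoc, Matrix.mul_one, Matrix.one_mul]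

theorem binet_formula_jordan_one (k : ℕ) (hk : 1 ≤ k) (a : ℕ → ℂ)
    (ha : ∀ n, a (n + k) = a n) (x : ℕ → ℂ)
    (hx : ∀ n, x (n + 2) = a n * x (n + 1) + x n)
    (J : Matrix (Fin 2) (Fin 2) ℂ) (hJ : IsUnit J.det)
    (hC : fibProd a k = J * !![1, 1; 0, 1] * J⁻¹) (n : ℕ) :
    x (n * k) =
      (J 1 0 * J⁻¹ 0 0 + ((n : ℂ) * J 1 0 + J 1 1) * J⁻¹ 1 0) * x 1 +
      (J 1 0 * J⁻¹ 0 1 + ((n : ℂ) * J 1 0 + J 1 1) * J⁻¹ 1 1) * x 0 ∧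
    x (n * k + 1) =
      (J 0 0 * J⁻¹ 0 0 + ((n : ℂ) * J 0 0 + J 0 1) * J⁻¹ 1 0) * x 1 +
      (J 0 0 * J⁻¹ 0 1 + ((n : ℂ) * J 0 0 + J 0 1) * J⁻¹ 1 1) * x 0 := by
  have hP : fibProd a (n * k) = J * !![1, (n : ℂ); 0, 1] * J⁻¹ := by
    rw [fibProd_pow a k ha n, hC, conjPowAux J _ hJ n, jordan_pow]
  obtain ⟨h1, h2⟩ := fibProd_entries a x hx (n * k)
  rw [hP] at h1 h2
  constructor
  · rw [h2]
    simp [Matrix.mul_apply, Fin.sum_univ_two]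
    ring
  · rw [h1]
    simp [Matrix.mul_apply, Fin.sum_univ_two]
    ring
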